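/- arXiv:2210.09351 — 5 statements merged into one kernel-verified Lean document; each statement's English description precedes it below -/
import Mathlib

section
/- Let M be an m×n matrix with entries in a commutative ring R, let c be a positive integer with c ≤ n, and let M|_c denote the submatrix consisting of the first c columns of M. Then for every column index b with c < b ≤ n and every positive integer k, the product of the entry M₁b with any k×k minor of M|_c lies in the ideal generated by the (k+1)×(k+1) minors of M together with the entries M₁₁, M₁₂, …, M₁c of the first row of M|_c. -/
/-- Lemma 5.3 (Lemma on minors): for an `m × n` matrix `M` over a commutative ring,
the product of the entry `M 0 b` (with `c ≤ b`) with any `k × k` minor of the submatrix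
of the first `c` columns lies in the ideal generated by the `(k+1) × (k+1)` minors of `M`
together with the first `c` entries of the first row. -/
theorem stmt0 {R : Type*} [CommRing R] {m n : ℕ} (hm : 0 < m)
    (M : Matrix (Fin m) (Fin n) R) (c : ℕ) (hc : 0 < c) (hcn : c ≤ n)
    (b : Fin n) (hb : c ≤ b.1) (k : ℕ) (hk : 0 < k)
    (r : Fin k → Fin m) (s : Fin k → Fin n)
    (hr : Function.Injective r) (hs : Function.Injective s)
    (hscol : ∀ i, (s i).1 < c) :
    M ⟨0, hm⟩ b * (M.submatrix r s).det ∈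
      Ideal.span
        ({x : R | ∃ (r' : Fin (k + 1) → Fin m) (s' : Fin (k + 1) → Fin n),
            Function.Injective r' ∧ Function.Injective s' ∧
            x = (M.submatrix r' s').det} ∪
         {x : R | ∃ j : Fin n, j.1 < c ∧ x = M ⟨0, hm⟩ j}) := by
  classical
  set G : Set R :=
    ({x : R | ∃ (r' : Fin (k + 1) → Fin m) (s' : Fin (k + 1) → Fin n),
        Function.Injective r' ∧ Function.Injective s' ∧
        x = (M.submatrix r' s').det} ∪
     {x : R | ∃ j : Fin n, j.1 < c ∧ x = M ⟨0, hm⟩ j}) with hG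
  set I := Ideal.span G with hI
  set r' : Fin (k + 1) → Fin m := Fin.cons ⟨0, hm⟩ r with hr'
  set s' : Fin (k + 1) → Fin n := Fin.cons b s with hs'
  set A : Matrix (Fin (k + 1)) (Fin (k + 1)) R := M.submatrix r' s' with hA
  have hdet := Matrix.det_succ_row_zero A
  rw [Fin.sum_univ_succ] at hdet
  have h00 : A 0 0 = M ⟨0, hm⟩ b := rfl
  have hsub0 : A.submatrix Fin.succ ((0 : Fin (k + 1)).succAbove) = M.submatrix r s := by
    ext i j
    simp [hA, Fin.succAbove_zero, hr', hs']
  rw [h00, hsub0] at hdet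
  have key : M ⟨0, hm⟩ b * (M.submatrix r s).det =
      A.det - ∑ j : Fin k, (-1 : R) ^ ((j.succ : Fin (k+1)) : ℕ) * A 0 j.succ *
        (A.submatrix Fin.succ (j.succ).succAbove).det := by
    rw [hdet]; simp only [Fin.val_zero, pow_zero, one_mul]; ring
  rw [key]
  have hdetA : A.det ∈ I := by
    by_cases h0 : (⟨0, hm⟩ : Fin m) ∈ Set.range r
    · obtain ⟨i, hi⟩ := h0
      have : A.det = 0 := by
        apply Matrix.det_zero_of_row_eq (i := 0) (j := i.succ)
        · exact (Fin.succ_ne_zero i).symm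
        · funext j
          simp [hA, hr', hi]
      rw [this]; exact I.zero_mem
    · apply Ideal.subset_span
      left
      refine ⟨r', s', Fin.cons_injective_of_injective h0 hr,
        Fin.cons_injective_of_injective ?_ hs, rfl⟩
      rintro ⟨i, hi⟩
      exact absurd (hi ▸ hscol i) (not_lt.mpr hb)
  refine Ideal.sub_mem _ hdetA (Ideal.sum_mem _ fun j _ => ?_)
  have hA0 : A 0 j.succ = M ⟨0, hm⟩ (s j) := rfl
  rw [hA0]
  have hgen : M ⟨0, hm⟩ (s j) ∈ I := by
    apply Ideal.subset_span
    right
    exact ⟨s j, hscol j, rfl⟩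
  exact Ideal.mul_mem_right _ _ (Ideal.mul_mem_left _ _ hgen)
end

section
/- Let Q be an n×n orthogonal matrix over a field K (i.e., QᵀQ = 1), and let α, β ⊆ {1,…,n} be subsets of cardinality k with 1 ≤ k ≤ n−1. Then det(Q_{α|β}) = sgn(α)·sgn(β)·det(Q)·det(Q_{αᶜ|βᶜ}), where Q_{α|β} is the submatrix of Q with rows indexed by α and columns indexed by β, αᶜ and βᶜ are the complements, and sgn(α) is the sign of the permutation sending (1,…,n) to (α, αᶜ) with each block in ascending order. -/
open Finset Matrix

/-- The permutation of `Fin n` sending `(1, …, n)` to `(α, αᶜ)`, with the elements of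
`α` and of `αᶜ` each listed in ascending order. -/
noncomputable def finsetPerm {n : ℕ} (α : Finset (Fin n)) : Equiv.Perm (Fin n) :=
  ((finCongr (show n = α.card + (n - α.card) by
      have h : α.card ≤ n := by simpa using α.card_le_univ
      omega)).trans <|
    (finSumFinEquiv.symm).trans <|
    (Equiv.sumCongr (α.orderIsoOfFin rfl).toEquiv
      ((αᶜ).orderIsoOfFin (by simp [Finset.card_compl])).toEquiv).trans <|
    (Equiv.sumCongr (Equiv.refl _)
      (Equiv.subtypeEquivRight (fun x => Finset.mem_compl))).trans
    (Equiv.sumCompl (· ∈ α)))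

/-- The sign `sgn(α)` of the permutation sending `(1, …, n)` to `(α, αᶜ)`. -/
noncomputable def finsetSign {n : ℕ} (α : Finset (Fin n)) : ℤ :=
  Equiv.Perm.sign (finsetPerm α)

lemma finsetPerm_apply {n k : ℕ} (α : Finset (Fin n)) (hα : α.card = k)
    (hn : k + (n - k) = n) (x : Fin k ⊕ Fin (n - k)) :
    finsetPerm α (finCongr hn (finSumFinEquiv x)) =
      Sum.elim (fun i => ((α.orderIsoOfFin hα) i : Fin n))
        (fun j => (((αᶜ).orderIsoOfFin (by simp [Finset.card_compl, hα])) j : Fin n)) x := by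
  subst hα
  cases x with
  | inl i =>
    simp [finsetPerm, Fin.ext_iff]
  | inr j =>
    simp [finsetPerm, Fin.ext_iff]

lemma block_det_aux {K : Type*} [Field K] {k m : ℕ}
    (A : Matrix (Fin k) (Fin k) K) (B : Matrix (Fin k) (Fin m) K)
    (C : Matrix (Fin m) (Fin k) K) (D : Matrix (Fin m) (Fin m) K)
    (h : (fromBlocks A B C D)ᵀ * fromBlocks A B C D = 1) :
    A.det = (fromBlocks A B C D).det * D.det := by
  have h' : fromBlocks A B C D * (fromBlocks A B C D)ᵀ = 1 := mul_eq_one_comm.mp h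
  rw [fromBlocks_transpose, fromBlocks_multiply, ← fromBlocks_one] at h'
  have h12 : A * Cᵀ + B * Dᵀ = 0 := by
    have := congrArg toBlocks₁₂ h'
    simpa only [toBlocks_fromBlocks₁₂] using this
  have h22 : C * Cᵀ + D * Dᵀ = 1 := by
    have := congrArg toBlocks₂₂ h'
    simpa [← fromBlocks_one] using this
  have key : fromBlocks A B C D * fromBlocks 1 Cᵀ 0 Dᵀ = fromBlocks A 0 C 1 := by
    rw [fromBlocks_multiply]
    simp [h12, h22]
  have hdet := congrArg Matrix.det key
  rw [det_mul, det_fromBlocks_zero₂₁, det_fromBlocks_zero₁₂, det_transpose] at hdet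
  simpa [mul_comm] using hdet.symm

/-- Lemma 7.6: for an orthogonal matrix `Q` and size-`k` subsets `α, β` of the indices,
`det (Q_{α|β}) = sgn α * sgn β * det Q * det (Q_{αᶜ|βᶜ})`. -/
theorem stmt1 {K : Type*} [Field K] {n k : ℕ} (hk1 : 1 ≤ k) (hkn : k ≤ n - 1)
    (Q : Matrix (Fin n) (Fin n) K) (hQ : Qᵀ * Q = 1)
    (α β : Finset (Fin n)) (hα : α.card = k) (hβ : β.card = k) :
    (Q.submatrix (fun i : Fin k => ((α.orderIsoOfFin hα) i : Fin n))
        (fun j : Fin k => ((β.orderIsoOfFin hβ) j : Fin n))).det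
      = (finsetSign α : K) * (finsetSign β : K) * Q.det *
        (Q.submatrix
          (fun i : Fin (n - k) =>
            (((αᶜ).orderIsoOfFin (by simp [Finset.card_compl, hα])) i : Fin n))
          (fun j : Fin (n - k) =>
            (((βᶜ).orderIsoOfFin (by simp [Finset.card_compl, hβ])) j : Fin n))).det := by
  have hkn' : k ≤ n := le_trans hkn (Nat.sub_le n 1)
  have hn : k + (n - k) = n := by omega
  set e : Fin k ⊕ Fin (n - k) ≃ Fin n := finSumFinEquiv.trans (finCongr hn) with he
  set σ := finsetPerm α with hσ
  set τ := finsetPerm β with hτ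
  set M : Matrix (Fin k ⊕ Fin (n - k)) (Fin k ⊕ Fin (n - k)) K :=
    Q.submatrix (fun p => σ (e p)) (fun p => τ (e p)) with hM
  have hrow : (fun p => σ (e p)) = Sum.elim
      (fun i : Fin k => ((α.orderIsoOfFin hα) i : Fin n))
      (fun j : Fin (n - k) =>
        (((αᶜ).orderIsoOfFin (by simp [Finset.card_compl, hα])) j : Fin n)) := by
    funext p
    exact finsetPerm_apply α hα hn p
  have hcol : (fun p => τ (e p)) = Sum.elim
      (fun i : Fin k => ((β.orderIsoOfFin hβ) i : Fin n))
      (fun j : Fin (n - k) =>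
        (((βᶜ).orderIsoOfFin (by simp [Finset.card_compl, hβ])) j : Fin n)) := by
    funext p
    exact finsetPerm_apply β hβ hn p
  have hMb : M = fromBlocks
      (Q.submatrix (fun i : Fin k => ((α.orderIsoOfFin hα) i : Fin n))
        (fun j : Fin k => ((β.orderIsoOfFin hβ) j : Fin n)))
      (Q.submatrix (fun i : Fin k => ((α.orderIsoOfFin hα) i : Fin n))
        (fun j : Fin (n - k) =>
          (((βᶜ).orderIsoOfFin (by simp [Finset.card_compl, hβ])) j : Fin n)))
      (Q.submatrix
        (fun i : Fin (n - k) =>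
          (((αᶜ).orderIsoOfFin (by simp [Finset.card_compl, hα])) i : Fin n))
        (fun j : Fin k => ((β.orderIsoOfFin hβ) j : Fin n)))
      (Q.submatrix
        (fun i : Fin (n - k) =>
          (((αᶜ).orderIsoOfFin (by simp [Finset.card_compl, hα])) i : Fin n))
        (fun j : Fin (n - k) =>
          (((βᶜ).orderIsoOfFin (by simp [Finset.card_compl, hβ])) j : Fin n))) := by
    rw [hM, hrow, hcol]
    ext (i | i) (j | j) <;> rfl
  -- M is orthogonal
  have hMo : Mᵀ * M = 1 := by
    rw [hM, transpose_submatrix]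
    rw [← submatrix_mul Qᵀ Q _ (fun p => σ (e p)) _
      ((e.trans σ).bijective), hQ]
    exact submatrix_one_equiv (e.trans τ)
  -- determinant of M
  have hMdet : M.det = (finsetSign α : K) * (finsetSign β : K) * Q.det := by
    have : M = (Q.submatrix σ τ).submatrix e e := by
      rw [hM]; rfl
    rw [this, det_submatrix_equiv_self]
    have h1 : Q.submatrix σ τ = (Q.submatrix id τ).submatrix σ id := rfl
    rw [h1, det_permute, det_permute', hσ, hτ, finsetSign, finsetSign]
    push_cast
    ring
  have := block_det_aux _ _ _ _ (hMb ▸ hMo)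
  rw [← hMb, hMdet] at this
  rw [this]
end

section
/- Let S be an ℕ-graded ring, finitely generated over a field S₀. Let I be a homogeneous ideal and P a homogeneous prime ideal with I ⊆ P. Suppose there exists a homogeneous element x of positive degree with x ∉ P such that I + xS is a radical ideal. If xP ⊆ I, then I is a radical ideal. -/
/-- Lemma 5.1(1) (principal radical systems): let `S` be an ℕ-graded ring, finitely
generated over a field `S₀ = K`. If `I ⊆ P` with `P` a homogeneous prime, `x` homogeneous
of positive degree with `x ∉ P`, `I + xS` radical, and `xP ⊆ I`, then `I` is radical. -/
theorem stmt10 {K S : Type*} [Field K] [CommRing S] [Algebra K S]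
    (𝒜 : ℕ → Submodule K S) [GradedAlgebra 𝒜]
    (hfg : Algebra.FiniteType K S)
    (I P : Ideal S) (hI : I.IsHomogeneous 𝒜) (hP : P.IsHomogeneous 𝒜)
    (hprime : P.IsPrime) (hIP : I ≤ P)
    (x : S) (d : ℕ) (hd : 0 < d) (hx : x ∈ 𝒜 d) (hxP : x ∉ P)
    (hrad : (I + Ideal.span {x}).IsRadical)
    (hxPI : ∀ p ∈ P, x * p ∈ I) :
    I.IsRadical := by
  intro y hy
  -- y ∈ radical (I + span {x}) since I ≤ I + span {x}
  have hy' : y ∈ I + Ideal.span {x} :=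
    hrad (Ideal.radical_mono le_sup_left hy)
  rw [Ideal.add_eq_sup, Submodule.mem_sup] at hy'
  obtain ⟨i, hi, z, hz, hiz⟩ := hy'
  rw [Ideal.mem_span_singleton'] at hz
  obtain ⟨s, rfl⟩ := hz
  -- s * x ∈ radical I ≤ P
  have hsx : s * x ∈ I.radical := by
    have : s * x = y - i := by rw [← hiz]; ring
    rw [this]
    exact Submodule.sub_mem _ hy (Ideal.le_radical hi)
  have hsxP : s * x ∈ P := (hprime.isRadical.radical_le_iff.mpr hIP) hsx
  have hsP : s ∈ P := (hprime.mem_or_mem hsxP).resolve_right hxP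
  have : s * x ∈ I := by rw [mul_comm]; exact hxPI s hsP
  rw [← hiz]
  exact Ideal.add_mem _ hi this
end

section
/- Let S be an ℕ-graded ring, finitely generated over a field S₀. Let I be a homogeneous ideal and P a homogeneous prime ideal with I ⊆ P and rad I = P. Suppose there exists a homogeneous element x of positive degree with x ∉ P such that I + xS is a radical ideal. Then I = P; in particular, I is prime. -/
/-- Lemma 5.1(2) (principal radical systems): let `S` be an ℕ-graded ring, finitely
generated over a field `S₀ = K`. If `I ⊆ P` with `P` a homogeneous prime, `rad I = P`,
and `x` is homogeneous of positive degree with `x ∉ P` and `I + xS` radical,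
then `I = P`; in particular `I` is prime. -/
theorem stmt11 {K S : Type*} [Field K] [CommRing S] [Algebra K S]
    (𝒜 : ℕ → Submodule K S) [GradedAlgebra 𝒜]
    (hfg : Algebra.FiniteType K S)
    (I P : Ideal S) (hI : I.IsHomogeneous 𝒜) (hP : P.IsHomogeneous 𝒜)
    (hprime : P.IsPrime) (hIP : I ≤ P) (hradIP : I.radical = P)
    (x : S) (d : ℕ) (hd : 0 < d) (hx : x ∈ 𝒜 d) (hxP : x ∉ P)
    (hrad : (I + Ideal.span {x}).IsRadical) :
    I = P := by
  -- Step 1: P ≤ I + span {x}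
  have hstep : P ≤ I + Ideal.span {x} := by
    rw [← hradIP, ← hrad.radical]
    exact Ideal.radical_mono le_sup_left
  -- Step 2: every p ∈ P can be written as i + x^n * s with i ∈ I, s ∈ P
  have hiter : ∀ n : ℕ, ∀ p ∈ P, ∃ i ∈ I, ∃ s ∈ P, p = i + x ^ n * s := by
    intro n
    induction n with
    | zero => intro p hp; exact ⟨0, I.zero_mem, p, hp, by ring⟩
    | succ n ih =>
      intro p hp
      obtain ⟨i, hi, s, hs, rfl⟩ := ih p hp
      have hs' : s ∈ I + Ideal.span {x} := hstep hs
      rw [Ideal.add_eq_sup, Submodule.mem_sup] at hs'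
      obtain ⟨i', hi', y, hy, rfl⟩ := hs'
      obtain ⟨c, rfl⟩ := Ideal.mem_span_singleton'.mp hy
      have hcx : c * x ∈ P := by
        have : i' + c * x ∈ P := hs
        have := P.sub_mem this (hIP hi')
        simpa using this
      have hc : c ∈ P := (hprime.mem_or_mem hcx).resolve_right hxP
      refine ⟨i + x ^ n * i', I.add_mem hi (I.mul_mem_left _ hi'), c, hc, by ring⟩
  -- Step 3: homogeneous elements of P are in I
  have hhom : ∀ e : ℕ, ∀ p ∈ P, (p ∈ 𝒜 e) → p ∈ I := by
    intro e p hp hpe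
    obtain ⟨i, hi, s, hs, heq⟩ := hiter (e + 1) p hp
    have hxn : x ^ (e + 1) ∈ 𝒜 ((e + 1) * d) := by
      simpa using SetLike.pow_mem_graded (e + 1) hx
    have hlt : ¬ ((e + 1) * d ≤ e) := by nlinarith
    have h1 : (DirectSum.decompose 𝒜 p e : S) = p :=
      DirectSum.decompose_of_mem_same 𝒜 hpe
    have h2 : (DirectSum.decompose 𝒜 (x ^ (e + 1) * s) e : S) = 0 :=
      DirectSum.coe_decompose_mul_of_left_mem_of_not_le 𝒜 hxn hlt
    have h3 : (DirectSum.decompose 𝒜 i e : S) ∈ I := hI e hi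
    have : (DirectSum.decompose 𝒜 p e : S)
        = (DirectSum.decompose 𝒜 i e : S) + (DirectSum.decompose 𝒜 (x ^ (e + 1) * s) e : S) := by
      rw [heq]; simp
    rw [h1, h2, add_zero] at this
    rw [this]; exact h3
  -- Step 4: conclude
  refine le_antisymm hIP ?_
  intro p hp
  classical
  have := DirectSum.sum_support_decompose 𝒜 p
  rw [← this]
  exact I.sum_mem fun e _ => hhom e _ (hP e hp) (SetLike.coe_mem _)
end

section
/- Let K be a field of characteristic other than two, and let Q = (A, B; C, D) be an n×n orthogonal matrix (QQᵀ = 1) partitioned so that A is k×k and D is (n−k)×(n−k). Then det(Q)·det(D) = det(A). -/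
open Matrix

/-- For an orthogonal matrix `Q = (A, B; C, D)` over a field of characteristic `≠ 2`,
partitioned with `A` of size `k × k` and `D` of size `m × m`, one has
`det Q · det D = det A`. -/
theorem stmt19 {K : Type*} [Field K] (hchar : ringChar K ≠ 2) {k m : ℕ}
    (Q : Matrix (Fin k ⊕ Fin m) (Fin k ⊕ Fin m) K) (hQ : Q * Qᵀ = 1) :
    Q.det * (Q.toBlocks₂₂).det = (Q.toBlocks₁₁).det := by
  set A := Q.toBlocks₁₁ with hA
  set B := Q.toBlocks₁₂ with hB
  set C := Q.toBlocks₂₁ with hC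
  set D := Q.toBlocks₂₂ with hD
  have hQeq : Q = fromBlocks A B C D := (fromBlocks_toBlocks Q).symm
  have hQ' : fromBlocks A B C D * (fromBlocks A B C D)ᵀ = fromBlocks 1 0 0 1 := by
    rw [← hQeq, hQ, ← fromBlocks_one]
  rw [fromBlocks_transpose, fromBlocks_multiply] at hQ'
  have h12 : A * Cᵀ + B * Dᵀ = 0 := by
    have := congrArg Matrix.toBlocks₁₂ hQ'
    simp only [toBlocks_fromBlocks₁₂] at this; exact this
  have h22 : C * Cᵀ + D * Dᵀ = 1 := by
    have := congrArg Matrix.toBlocks₂₂ hQ'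
    simp only [toBlocks_fromBlocks₂₂] at this; exact this
  have key : Q * fromBlocks 1 Cᵀ 0 Dᵀ = fromBlocks A 0 C 1 := by
    rw [hQeq, fromBlocks_multiply]
    simp [h12, h22]
  have := congrArg Matrix.det key
  rw [det_mul, det_fromBlocks_zero₂₁, det_fromBlocks_zero₁₂] at this
  simpa [det_transpose] using this
end
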